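/- Let L be a complex Laurent polynomial that is self-conjugate, and suppose L = A ∘ L₁ where A ∈ ℂ[z] is a nonconstant polynomial and L₁ ∈ ℂ[z,1/z] is a nonconstant Laurent polynomial. Then there exist complex numbers α, β with α ≠ 0 such that the Laurent polynomial α·L₁ + β is self-conjugate and the polynomial A((z − β)/α) (the composition of A with the inverse of the degree-one polynomial v(z) = αz + β) has real coefficients. -/

import Mathlib

open Polynomial LaurentPolynomial


namespace SelfConjAux

instance instCoeFunLaurent : CoeFun (LaurentPolynomial ℂ) (fun _ => ℤ → ℂ) := ⟨fun f => f.coeff⟩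

/-- `f` has all coefficients above `k` equal to zero. -/
def DegLE (f : LaurentPolynomial ℂ) (k : ℤ) : Prop := ∀ ⦃i : ℤ⦄, k < i → f i = 0

lemma mul_apply_top {f g : LaurentPolynomial ℂ} {p q : ℤ}
    (hf : DegLE f p) (hg : DegLE g q) : (f * g) (p + q) = f p * g q := by
  classical
  rw [AddMonoidAlgebra.coeff_mul, Finsupp.sum]
  rw [Finset.sum_eq_single p]
  · rw [Finsupp.sum, Finset.sum_eq_single q]
    · rw [if_pos rfl]
    · intro b hb hbq
      refine if_neg fun hc => hbq (by linarith)
    · intro hq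
      rw [if_pos rfl, Finsupp.notMem_support_iff.mp hq, mul_zero]
  · intro a ha hap
    have haa : a < p := by
      rcases lt_or_ge p a with h | h
      · exact absurd (hf h) (Finsupp.mem_support_iff.mp ha)
      · exact lt_of_le_of_ne h hap
    refine Finset.sum_eq_zero fun b hb => if_neg fun hc => ?_
    have hbb : b ≤ q := by
      by_contra hb'
      exact (Finsupp.mem_support_iff.mp hb) (hg (by linarith))
    linarith
  · intro hp
    refine Finset.sum_eq_zero fun b _ => ?_
    rw [Finsupp.notMem_support_iff.mp hp]; simp
lemma degLE_mul {f g : LaurentPolynomial ℂ} {p q : ℤ}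
    (hf : DegLE f p) (hg : DegLE g q) : DegLE (f * g) (p + q) := by
  intro i hi
  classical
  rw [AddMonoidAlgebra.coeff_mul, Finsupp.sum]
  refine Finset.sum_eq_zero fun a ha => Finset.sum_eq_zero fun b hb => if_neg fun hc => ?_
  have h1 : a ≤ p := by
    by_contra h; exact (Finsupp.mem_support_iff.mp ha) (hf (by linarith))
  have h2 : b ≤ q := by
    by_contra h; exact (Finsupp.mem_support_iff.mp hb) (hg (by linarith))
  linarith

lemma degLE_one : DegLE (1 : LaurentPolynomial ℂ) 0 := by
  intro i hi
  rw [← LaurentPolynomial.single_zero_one_eq_one, AddMonoidAlgebra.coeff_single, Finsupp.single_apply, if_neg (by omega)]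

lemma one_apply_zero : (1 : LaurentPolynomial ℂ) 0 = 1 := by
  rw [← LaurentPolynomial.single_zero_one_eq_one, AddMonoidAlgebra.coeff_single, Finsupp.single_apply, if_pos rfl]

lemma degLE_pow {f : LaurentPolynomial ℂ} {m : ℤ} (hf : DegLE f m) (k : ℕ) :
    DegLE (f ^ k) ((k : ℤ) * m) := by
  induction k with
  | zero => simpa using degLE_one
  | succ k ih =>
    have := degLE_mul ih hf
    rw [pow_succ, show ((k + 1 : ℕ) : ℤ) * m = (k:ℤ) * m + m by push_cast; ring]
    exact this

lemma pow_apply_top {f : LaurentPolynomial ℂ} {m : ℤ} (hf : DegLE f m) (k : ℕ) :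
    (f ^ k) ((k : ℤ) * m) = (f m) ^ k := by
  induction k with
  | zero => simpa using one_apply_zero
  | succ k ih =>
    have := mul_apply_top (degLE_pow hf k) hf
    rw [ih] at this
    rw [pow_succ, show ((k + 1 : ℕ) : ℤ) * m = (k:ℤ) * m + m by push_cast; ring, this, pow_succ]
    
lemma degLE_smul {f : LaurentPolynomial ℂ} {m : ℤ} (c : ℂ) (hf : DegLE f m) :
    DegLE (c • f) m := fun i hi => by
  rw [AddMonoidAlgebra.coeff_smul_apply, hf hi, smul_zero]

lemma degLE_of_le {f : LaurentPolynomial ℂ} {m m' : ℤ} (h : m ≤ m') (hf : DegLE f m) :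
    DegLE f m' := fun i hi => hf (lt_of_le_of_lt h hi)

lemma degLE_aeval {f : LaurentPolynomial ℂ} {m : ℤ} (hm : 0 ≤ m) (hf : DegLE f m)
    (P : ℂ[X]) {n : ℕ} (hn : P.natDegree ≤ n) :
    DegLE (Polynomial.aeval f P) ((n : ℤ) * m) := by
  rw [Polynomial.aeval_eq_sum_range' (lt_of_le_of_lt hn (Nat.lt_succ_self n))]
  intro i hi
  rw [AddMonoidAlgebra.coeff_sum, Finsupp.finset_sum_apply]
  refine Finset.sum_eq_zero fun k hk => ?_
  have hk' : (k : ℤ) * m ≤ (n : ℤ) * m := by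
    have : (k : ℤ) ≤ n := by exact_mod_cast Nat.le_of_lt_succ (Finset.mem_range.mp hk)
    exact mul_le_mul_of_nonneg_right this hm
  rw [AddMonoidAlgebra.coeff_smul_apply, degLE_pow hf k (lt_of_le_of_lt hk' hi), smul_zero]

lemma aeval_apply_top {f : LaurentPolynomial ℂ} {m : ℤ} (hm : 1 ≤ m) (hf : DegLE f m)
    (P : ℂ[X]) {n : ℕ} (hn : P.natDegree ≤ n) :
    (Polynomial.aeval f P) ((n : ℤ) * m) = P.coeff n * (f m) ^ n := by
  rw [Polynomial.aeval_eq_sum_range' (lt_of_le_of_lt hn (Nat.lt_succ_self n))]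
  rw [AddMonoidAlgebra.coeff_sum, Finsupp.finset_sum_apply]
  rw [Finset.sum_eq_single n]
  · rw [AddMonoidAlgebra.coeff_smul_apply, pow_apply_top hf, smul_eq_mul]
  · intro k hk hkn
    have hklt : (k : ℤ) * m < (n : ℤ) * m := by
      have hk2 : (k : ℤ) < n := by
        exact_mod_cast lt_of_le_of_ne (Nat.le_of_lt_succ (Finset.mem_range.mp hk)) hkn
      exact mul_lt_mul_of_pos_right hk2 (by linarith)
    rw [AddMonoidAlgebra.coeff_smul_apply, degLE_pow hf k hklt, smul_zero]
  · intro hn'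
    exact absurd (Finset.self_mem_range_succ n) hn'
lemma key {A B : ℂ[X]} {n : ℕ} (hn : 1 ≤ n) (hAn : A.natDegree ≤ n) (hBn : B.natDegree ≤ n)
    (hBtop : B.coeff n ≠ 0)
    {f g : LaurentPolynomial ℂ} {m : ℤ} (hm : 1 ≤ m)
    (hfd : DegLE f m) (hgd : DegLE g m) (hfm : f m ≠ 0) (hgm : g m ≠ 0)
    (heq : Polynomial.aeval f A = Polynomial.aeval g B) :
    ∀ i : ℤ, 1 ≤ i → g i = (g m / f m) * f i := by
  classical
  set ζ : ℂ := g m / f m with hζdef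
  have hζ0 : ζ ≠ 0 := div_ne_zero hgm hfm
  have hζf : ζ * f m = g m := div_mul_cancel₀ (g m) hfm
  -- leading coefficient relation
  have hlead : A.coeff n * f m ^ n = B.coeff n * g m ^ n := by
    have h1 := aeval_apply_top hm hfd A hAn
    have h2 := aeval_apply_top hm hgd B hBn
    rw [heq] at h1; rw [h1] at h2; exact h2
  have hζn : B.coeff n * ζ ^ n = A.coeff n := by
    have hfmn : f m ^ n ≠ 0 := pow_ne_zero _ hfm
    rw [hζdef, div_pow, mul_div_assoc', div_eq_iff hfmn]
    linear_combination -hlead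
  by_contra hcon
  push_neg at hcon
  obtain ⟨i₀, hi₀1, hi₀⟩ := hcon
  set D : LaurentPolynomial ℂ := g - ζ • f with hD
  have hDapp : ∀ j : ℤ, D j = g j - ζ * f j := fun j => by
    rw [hD, AddMonoidAlgebra.coeff_sub, Finsupp.sub_apply, AddMonoidAlgebra.coeff_smul_apply, smul_eq_mul]
  set S : Finset ℤ := D.coeff.support.filter (fun j => 1 ≤ j) with hSdef
  have hS : S.Nonempty := by
    refine ⟨i₀, Finset.mem_filter.mpr ⟨Finsupp.mem_support_iff.mpr ?_, hi₀1⟩⟩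
    rw [hDapp]; intro hc; exact hi₀ (sub_eq_zero.mp hc)
  set d : ℤ := S.max' hS with hd
  have hd1 : 1 ≤ d := (Finset.mem_filter.mp (S.max'_mem hS)).2
  have hDd : D d ≠ 0 := Finsupp.mem_support_iff.mp (Finset.mem_filter.mp (S.max'_mem hS)).1
  have hDle : DegLE D d := by
    intro j hj
    by_contra hj0
    have : j ∈ S := Finset.mem_filter.mpr ⟨Finsupp.mem_support_iff.mpr hj0, by linarith⟩
    exact absurd (S.le_max' j this) (not_le.mpr hj)
  set g' : LaurentPolynomial ℂ := ζ • f with hg'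
  have hg'd : DegLE g' m := degLE_smul ζ hfd
  have hg'm : g' m = g m := by rw [hg', AddMonoidAlgebra.coeff_smul_apply, smul_eq_mul, hζf]
  set T : LaurentPolynomial ℂ :=
    ∑ k ∈ Finset.range (n + 1), B.coeff k •
      (∑ j ∈ Finset.range k, g ^ j * g' ^ (k - 1 - j)) with hT
  -- identity : aeval g B - aeval g' B = D * T
  have hDT : Polynomial.aeval g B - Polynomial.aeval g' B = D * T := by
    rw [Polynomial.aeval_eq_sum_range' (lt_of_le_of_lt hBn (Nat.lt_succ_self n)) (x := g),
        Polynomial.aeval_eq_sum_range' (lt_of_le_of_lt hBn (Nat.lt_succ_self n)) (x := g'),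
        ← Finset.sum_sub_distrib, hT, Finset.mul_sum]
    refine Finset.sum_congr rfl fun k _ => ?_
    rw [← smul_sub, ← geom_sum₂_mul g g' k, hD, ← smul_mul_assoc]
    exact mul_comm _ _
  have hR : Polynomial.aeval f A - Polynomial.aeval g' B = D * T := by
    rw [heq]; exact hDT
  -- degree bound on R
  have hRdeg : DegLE (Polynomial.aeval f A - Polynomial.aeval g' B) (((n : ℤ) - 1) * m) := by
    rw [Polynomial.aeval_eq_sum_range' (lt_of_le_of_lt hAn (Nat.lt_succ_self n)) (x := f),
        Polynomial.aeval_eq_sum_range' (lt_of_le_of_lt hBn (Nat.lt_succ_self n)) (x := g'),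
        ← Finset.sum_sub_distrib]
    intro j hj
    rw [AddMonoidAlgebra.coeff_sum, Finsupp.finset_sum_apply]
    refine Finset.sum_eq_zero fun k hk => ?_
    have hkn : k ≤ n := Nat.le_of_lt_succ (Finset.mem_range.mp hk)
    rw [AddMonoidAlgebra.coeff_sub, Finsupp.sub_apply, AddMonoidAlgebra.coeff_smul_apply, AddMonoidAlgebra.coeff_smul_apply]
    rcases eq_or_lt_of_le hkn with hkeq | hklt
    · subst hkeq
      have hgf : (g' ^ k) j = ζ ^ k * (f ^ k) j := by
        rw [hg', _root_.smul_pow, AddMonoidAlgebra.coeff_smul_apply, smul_eq_mul]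
      rw [hgf, smul_eq_mul, smul_eq_mul]
      linear_combination ((f ^ k) j) * hζn.symm
    · have hkm : (k : ℤ) * m ≤ ((n : ℤ) - 1) * m := by
        have hc : (k : ℤ) < (n : ℤ) := by exact_mod_cast hklt
        exact mul_le_mul_of_nonneg_right (by omega) (by linarith)
      have hzf : (f ^ k) j = 0 := degLE_pow hfd k (lt_of_le_of_lt hkm hj)
      have hzg : (g' ^ k) j = 0 := degLE_pow hg'd k (lt_of_le_of_lt hkm hj)
      rw [hzf, hzg, smul_zero, smul_zero, sub_zero]
  -- degree bound on T
  have hTdeg : DegLE T (((n : ℤ) - 1) * m) := by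
    intro j hj
    rw [hT, AddMonoidAlgebra.coeff_sum, Finsupp.finset_sum_apply]
    refine Finset.sum_eq_zero fun k hk => ?_
    have hkn : k ≤ n := Nat.le_of_lt_succ (Finset.mem_range.mp hk)
    rw [AddMonoidAlgebra.coeff_smul_apply, AddMonoidAlgebra.coeff_sum, Finsupp.finset_sum_apply]
    rw [Finset.sum_eq_zero, smul_zero]
    intro l hl
    have hlk : l < k := Finset.mem_range.mp hl
    have hdeg : DegLE (g ^ l * g' ^ (k - 1 - l)) (((l : ℤ)) * m + ((k - 1 - l : ℕ) : ℤ) * m) :=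
      degLE_mul (degLE_pow hgd l) (degLE_pow hg'd (k - 1 - l))
    refine hdeg ?_
    have hsum : (l : ℤ) + ((k - 1 - l : ℕ) : ℤ) ≤ (n : ℤ) - 1 := by
      have : l + (k - 1 - l) = k - 1 := by omega
      omega
    calc (l : ℤ) * m + ((k - 1 - l : ℕ) : ℤ) * m
        = ((l : ℤ) + ((k - 1 - l : ℕ) : ℤ)) * m := by ring
      _ ≤ ((n : ℤ) - 1) * m := mul_le_mul_of_nonneg_right hsum (by linarith)
      _ < j := hj
  -- top coefficient of T
  have hTtop : T (((n : ℤ) - 1) * m) = B.coeff n * ((n : ℂ) * g m ^ (n - 1)) := by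
    rw [hT, AddMonoidAlgebra.coeff_sum, Finsupp.finset_sum_apply, Finset.sum_eq_single n]
    · rw [AddMonoidAlgebra.coeff_smul_apply, AddMonoidAlgebra.coeff_sum, Finsupp.finset_sum_apply, smul_eq_mul]
      congr 1
      have : ∀ l ∈ Finset.range n, (g ^ l * g' ^ (n - 1 - l)) (((n : ℤ) - 1) * m)
          = g m ^ (n - 1) := by
        intro l hl
        have hln : l < n := Finset.mem_range.mp hl
        have hidx : ((n : ℤ) - 1) * m = (l : ℤ) * m + ((n - 1 - l : ℕ) : ℤ) * m := by
          have : ((l : ℤ) + ((n - 1 - l : ℕ) : ℤ)) = (n : ℤ) - 1 := by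
            have : l + (n - 1 - l) = n - 1 := by omega
            omega
          rw [← this]; ring
        rw [hidx, mul_apply_top (degLE_pow hgd l) (degLE_pow hg'd (n - 1 - l)),
            pow_apply_top hgd, pow_apply_top hg'd, hg'm, ← pow_add]
        congr 1
        omega
      rw [Finset.sum_congr rfl this, Finset.sum_const, Finset.card_range, nsmul_eq_mul]
    · intro k hk hkn
      have hkn' : k < n := lt_of_le_of_ne (Nat.le_of_lt_succ (Finset.mem_range.mp hk)) hkn
      rw [AddMonoidAlgebra.coeff_smul_apply, AddMonoidAlgebra.coeff_sum, Finsupp.finset_sum_apply, Finset.sum_eq_zero, smul_zero]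
      intro l hl
      have hlk : l < k := Finset.mem_range.mp hl
      have hdeg : DegLE (g ^ l * g' ^ (k - 1 - l)) ((l : ℤ) * m + ((k - 1 - l : ℕ) : ℤ) * m) :=
        degLE_mul (degLE_pow hgd l) (degLE_pow hg'd (k - 1 - l))
      refine hdeg ?_
      have hsum : (l : ℤ) + ((k - 1 - l : ℕ) : ℤ) ≤ (n : ℤ) - 2 := by omega
      calc (l : ℤ) * m + ((k - 1 - l : ℕ) : ℤ) * m
          = ((l : ℤ) + ((k - 1 - l : ℕ) : ℤ)) * m := by ring
        _ ≤ ((n : ℤ) - 2) * m := mul_le_mul_of_nonneg_right hsum (by linarith)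
        _ < ((n : ℤ) - 1) * m := by nlinarith
    · intro hn'
      exact absurd (Finset.self_mem_range_succ n) hn'
  -- the contradiction
  have hzero : (Polynomial.aeval f A - Polynomial.aeval g' B) (((n : ℤ) - 1) * m + d) = 0 :=
    hRdeg (by linarith)
  have hnonzero : (D * T) (((n : ℤ) - 1) * m + d) = D d * T (((n : ℤ) - 1) * m) := by
    rw [add_comm]
    exact mul_apply_top hDle hTdeg
  rw [hR, hnonzero] at hzero
  rw [hTtop] at hzero
  have : (n : ℂ) ≠ 0 := Nat.cast_ne_zero.mpr (by omega)
  have hgmn : g m ^ (n - 1) ≠ 0 := pow_ne_zero _ hgm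
  rcases mul_eq_zero.mp hzero with h | h
  · exact hDd h
  · rcases mul_eq_zero.mp h with h | h
    · exact hBtop h
    · rcases mul_eq_zero.mp h with h | h
      · exact this h
      · exact hgmn h
/-- Coefficientwise conjugation on Laurent polynomials (as a function). -/
noncomputable def cm (f : LaurentPolynomial ℂ) : LaurentPolynomial ℂ :=
  AddMonoidAlgebra.ofCoeff (Finsupp.mapRange (starRingEnd ℂ) (map_zero _) f.coeff)

lemma cm_apply (f : LaurentPolynomial ℂ) (i : ℤ) : cm f i = (starRingEnd ℂ) (f i) :=
  Finsupp.mapRange_apply (hf := map_zero _)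

lemma cm_add (f g : LaurentPolynomial ℂ) : cm (f + g) = cm f + cm g := by
  ext i; rw [cm_apply, AddMonoidAlgebra.coeff_add, Finsupp.add_apply, AddMonoidAlgebra.coeff_add, Finsupp.add_apply, cm_apply, cm_apply, map_add]

lemma cm_mul (f g : LaurentPolynomial ℂ) : cm (f * g) = cm f * cm g := by
  induction f using AddMonoidAlgebra.induction_linear with
  | zero => ext i; simp [cm, Finsupp.mapRange_apply]
  | add f₁ f₂ h₁ h₂ => rw [add_mul, cm_add, h₁, h₂, cm_add, add_mul]
  | single a b =>
    induction g using AddMonoidAlgebra.induction_linear with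
    | zero => ext i; simp [cm, Finsupp.mapRange_apply]
    | add g₁ g₂ h₁ h₂ => rw [mul_add, cm_add, h₁, h₂, cm_add, mul_add]
    | single a' b' =>
      show cm (AddMonoidAlgebra.single a b * AddMonoidAlgebra.single a' b') = _
      rw [AddMonoidAlgebra.single_mul_single]
      have hs : ∀ (a : ℤ) (b : ℂ), cm (AddMonoidAlgebra.single a b)
          = AddMonoidAlgebra.single a ((starRingEnd ℂ) b) := fun a b => by
        unfold cm; rw [AddMonoidAlgebra.coeff_single, Finsupp.mapRange_single]; rfl
      rw [hs, hs, hs, AddMonoidAlgebra.single_mul_single, map_mul]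

/-- Conjugate-reflection `f ↦ f̄(1/T)` as a ring homomorphism. -/
noncomputable def crHom : LaurentPolynomial ℂ →+* LaurentPolynomial ℂ where
  toFun f := invert (cm f)
  map_one' := by
    show invert (cm 1) = 1
    have h1 : cm 1 = 1 := by
      rw [← LaurentPolynomial.single_zero_one_eq_one]
      unfold cm; rw [AddMonoidAlgebra.coeff_single, Finsupp.mapRange_single, map_one]; rfl
    rw [h1, map_one]
  map_mul' f g := by show invert (cm (f * g)) = invert (cm f) * invert (cm g); rw [cm_mul, map_mul]
  map_zero' := by
    show invert (cm 0) = 0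
    have h0 : cm 0 = 0 := by unfold cm; simp
    rw [h0, map_zero]
  map_add' f g := by show invert (cm (f + g)) = invert (cm f) + invert (cm g); rw [cm_add, map_add]

lemma crHom_apply (f : LaurentPolynomial ℂ) (i : ℤ) :
    crHom f i = (starRingEnd ℂ) (f (-i)) := by
  show invert (cm f) i = _
  rw [LaurentPolynomial.invert_apply, cm_apply]

lemma crHom_C (a : ℂ) : crHom (LaurentPolynomial.C a) = LaurentPolynomial.C ((starRingEnd ℂ) a) := by
  ext i
  rw [crHom_apply, LaurentPolynomial.C_apply, LaurentPolynomial.C_apply]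
  by_cases h : i = 0 <;> simp [h]

/-- `aeval` at a nonconstant Laurent polynomial is injective. -/
lemma aeval_injective_aux (L₁ : LaurentPolynomial ℂ)
    (hL₁ : ∀ c : ℂ, L₁ ≠ LaurentPolynomial.C c) :
    ∀ (N : ℕ) (P : ℂ[X]), P.natDegree ≤ N → Polynomial.aeval L₁ P = 0 → P = 0 := by
  intro N
  induction N with
  | zero =>
    intro P h0 hev
    have hP : P = Polynomial.C (P.coeff 0) := Polynomial.eq_C_of_natDegree_le_zero h0
    rw [hP] at hev ⊢
    rw [Polynomial.aeval_C] at hev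
    have : ((algebraMap ℂ (LaurentPolynomial ℂ)) (P.coeff 0)) 0 = 0 := by rw [hev]; simp
    rw [← LaurentPolynomial.C_eq_algebraMap, LaurentPolynomial.C_apply, if_pos rfl] at this
    rw [this, map_zero]
  | succ N ih =>
    intro P hdeg hev
    by_cases hP0 : P = 0
    · exact hP0
    by_cases hd0 : P.natDegree = 0
    · exact ih P (le_of_eq_of_le hd0 (Nat.zero_le N)) hev
    have hdpos : 0 < P.degree := Polynomial.natDegree_pos_iff_degree_pos.mp (Nat.pos_of_ne_zero hd0)
    obtain ⟨r, hr⟩ := Complex.exists_root hdpos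
    obtain ⟨Q, hQ⟩ := (Polynomial.dvd_iff_isRoot.mpr hr)
    by_cases hQ0 : Q = 0
    · rw [hQ, hQ0, mul_zero]
    have hXr : (X - Polynomial.C r) ≠ 0 := Polynomial.X_sub_C_ne_zero r
    have hQdeg : Q.natDegree ≤ N := by
      have := Polynomial.natDegree_mul hXr hQ0
      rw [← hQ, Polynomial.natDegree_X_sub_C] at this
      omega
    have hfactor : Polynomial.aeval L₁ P
        = (L₁ - LaurentPolynomial.C r) * Polynomial.aeval L₁ Q := by
      rw [hQ, map_mul, map_sub, Polynomial.aeval_X, Polynomial.aeval_C,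
        ← LaurentPolynomial.C_eq_algebraMap]
    rw [hfactor] at hev
    rcases mul_eq_zero.mp hev with h | h
    · exact absurd (sub_eq_zero.mp h) (hL₁ r)
    · rw [hQ, ih Q hQdeg h, mul_zero]

lemma aeval_injective (L₁ : LaurentPolynomial ℂ)
    (hL₁ : ∀ c : ℂ, L₁ ≠ LaurentPolynomial.C c) :
    Function.Injective (Polynomial.aeval L₁ : ℂ[X] →ₐ[ℂ] LaurentPolynomial ℂ) := by
  intro P Q h
  have : Polynomial.aeval L₁ (P - Q) = 0 := by rw [map_sub, h, sub_self]
  have := aeval_injective_aux L₁ hL₁ (P - Q).natDegree (P - Q) le_rfl this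
  exact sub_eq_zero.mp this

end SelfConjAux

open SelfConjAux

/-- A complex Laurent polynomial is self-conjugate if `conj (cᵢ) = c₋ᵢ` for all `i ∈ ℤ`
(equivalently `L̄(1/z) = L(z)`). -/
def SelfConjL (L : LaurentPolynomial ℂ) : Prop :=
  ∀ i : ℤ, (starRingEnd ℂ) (L.coeff i) = L.coeff (-i)

/-- **Normalization of polynomial decompositions of self-conjugate Laurent
polynomials.** If a self-conjugate complex Laurent polynomial `L` factors as
`L = A ∘ L₁` with `A ∈ ℂ[z]` nonconstant and `L₁` a nonconstant Laurent polynomial,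
then there are `α ≠ 0` and `β` such that `α L₁ + β` is self-conjugate and
`A((z - β)/α)` has real coefficients. -/
theorem normalize_decomposition_of_selfConjugate
    (L L₁ : LaurentPolynomial ℂ) (A : ℂ[X])
    (hA : 1 ≤ A.natDegree)
    (hL₁ : ∀ c : ℂ, L₁ ≠ LaurentPolynomial.C c)
    (hsc : SelfConjL L)
    (h : L = Polynomial.aeval L₁ A) :
    ∃ α β : ℂ, α ≠ 0 ∧
      SelfConjL (LaurentPolynomial.C α * L₁ + LaurentPolynomial.C β) ∧
      ∀ i : ℕ, ((A.comp (Polynomial.C α⁻¹ * (X - Polynomial.C β))).coeff i).im = 0 := by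
  classical
  set n := A.natDegree with hndef
  set Ab := A.map (starRingEnd ℂ) with hAb
  have hA0 : A ≠ 0 := Polynomial.ne_zero_of_natDegree_gt (n := 0) (by omega)
  have hAtop : A.coeff n ≠ 0 := by
    rw [hndef]; exact Polynomial.leadingCoeff_ne_zero.mpr hA0
  have hAbdeg : Ab.natDegree = n := Polynomial.natDegree_map_eq_of_injective (starRingEnd ℂ).injective A
  have hAbtop : Ab.coeff n ≠ 0 := by
    rw [hAb, Polynomial.coeff_map]
    simpa using hAtop
  set M := crHom L₁ with hMdef
  have hM_apply : ∀ i : ℤ, M i = (starRingEnd ℂ) (L₁ (-i)) := crHom_apply L₁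
  -- `L` is fixed by conjugate reflection
  have hLfix : crHom (Polynomial.aeval L₁ A) = Polynomial.aeval L₁ A := by
    rw [← h]
    ext i
    rw [crHom_apply]
    have := hsc (-i)
    rwa [neg_neg] at this
  -- main equation
  have hCalg : (algebraMap ℂ (LaurentPolynomial ℂ)) = (LaurentPolynomial.C : ℂ →+* _) :=
    RingHom.ext fun a => (LaurentPolynomial.C_eq_algebraMap a).symm
  have heq2 : Polynomial.aeval M Ab = Polynomial.aeval L₁ A := by
    have e2 := Polynomial.hom_eval₂ A (algebraMap ℂ (LaurentPolynomial ℂ)) crHom L₁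
    have e3 : crHom.comp (algebraMap ℂ (LaurentPolynomial ℂ))
        = (LaurentPolynomial.C : ℂ →+* _).comp (starRingEnd ℂ) := by
      refine RingHom.ext fun a => ?_
      rw [RingHom.comp_apply, RingHom.comp_apply, ← LaurentPolynomial.C_eq_algebraMap, crHom_C]
    calc Polynomial.aeval M Ab
        = eval₂ (algebraMap ℂ (LaurentPolynomial ℂ)) M Ab := Polynomial.aeval_def M Ab
      _ = eval₂ ((LaurentPolynomial.C : ℂ →+* _).comp (starRingEnd ℂ)) M A := by
          rw [hCalg, hAb, Polynomial.eval₂_map]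
      _ = crHom (eval₂ (algebraMap ℂ (LaurentPolynomial ℂ)) L₁ A) := by rw [e2, e3, hMdef]
      _ = Polynomial.aeval L₁ A := by rw [← Polynomial.aeval_def]; exact hLfix
  -- support facts
  have hL₁0 : L₁ ≠ 0 := fun h0 => hL₁ 0 (by rw [h0, map_zero])
  have hsupp : L₁.coeff.support.Nonempty := Finsupp.support_nonempty_iff.mpr (AddMonoidAlgebra.coeff_eq_zero.not.mpr hL₁0)
  set mp := L₁.coeff.support.max' hsupp with hmpdef
  set mn := L₁.coeff.support.min' hsupp with hmndef
  have hLmp : L₁ mp ≠ 0 := Finsupp.mem_support_iff.mp (L₁.coeff.support.max'_mem hsupp)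
  have hLmn : L₁ mn ≠ 0 := Finsupp.mem_support_iff.mp (L₁.coeff.support.min'_mem hsupp)
  have hdegL : DegLE L₁ mp := by
    intro i hi
    by_contra h0
    exact absurd (Finset.le_max' _ i (Finsupp.mem_support_iff.mpr h0)) (not_le.mpr hi)
  have hlowL : ∀ i : ℤ, i < mn → L₁ i = 0 := by
    intro i hi
    by_contra h0
    exact absurd (Finset.min'_le _ i (Finsupp.mem_support_iff.mpr h0)) (not_le.mpr hi)
  have hnc : ∃ i : ℤ, i ≠ 0 ∧ L₁ i ≠ 0 := by
    by_contra hc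
    push_neg at hc
    apply hL₁ (L₁ 0)
    ext i
    rw [LaurentPolynomial.C_apply]
    by_cases h0 : i = 0
    · rw [if_pos h0, h0]
    · rw [if_neg h0]; exact hc i h0
  have hdegM : DegLE M (-mn) := by
    intro i hi
    rw [hM_apply, hlowL _ (by omega), map_zero]
  have hMtop : M (-mn) ≠ 0 := by
    rw [hM_apply, neg_neg]
    simpa using hLmn
  have hn1 : 1 ≤ n := hA
  have hnZ : ((n : ℤ)) ≠ 0 := by exact_mod_cast (by omega : n ≠ 0)
  -- positivity of top degree
  have hmp1 : 1 ≤ mp := by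
    by_contra hc
    push_neg at hc
    have hmp0 : mp ≤ 0 := by omega
    have hmn1 : mn ≤ -1 := by
      obtain ⟨i, hi0, hiL⟩ := hnc
      have h1 : i ≤ mp := Finset.le_max' _ i (Finsupp.mem_support_iff.mpr hiL)
      have h2 : mn ≤ i := Finset.min'_le _ i (Finsupp.mem_support_iff.mpr hiL)
      omega
    have hz : DegLE (Polynomial.aeval L₁ A) 0 := by
      have := degLE_aeval (le_refl (0:ℤ)) (degLE_of_le hmp0 hdegL) A (le_refl n)
      rwa [mul_zero] at this
    have htop := aeval_apply_top (by omega : (1:ℤ) ≤ -mn) hdegM Ab (le_of_eq hAbdeg)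
    rw [heq2] at htop
    have hzero : (Polynomial.aeval L₁ A) ((n : ℤ) * (-mn)) = 0 :=
      hz (mul_pos (by exact_mod_cast hn1) (by omega))
    rw [hzero] at htop
    exact (mul_ne_zero hAbtop (pow_ne_zero _ hMtop)) htop.symm
  have hmn1 : mn ≤ -1 := by
    by_contra hc
    push_neg at hc
    have hmn0 : 0 ≤ mn := by omega
    have hdegM0 : DegLE M 0 := by
      intro i hi
      rw [hM_apply, hlowL _ (by omega), map_zero]
    have hz : DegLE (Polynomial.aeval M Ab) 0 := by
      have := degLE_aeval (le_refl (0:ℤ)) hdegM0 Ab (le_refl Ab.natDegree)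
      rwa [mul_zero] at this
    have htop := aeval_apply_top hmp1 hdegL A (le_refl n)
    rw [← heq2] at htop
    have hzero : (Polynomial.aeval M Ab) ((n : ℤ) * mp) = 0 :=
      hz (mul_pos (by exact_mod_cast hn1) (by omega))
    rw [hzero] at htop
    exact (mul_ne_zero hAtop (pow_ne_zero _ hLmp)) htop.symm
  -- symmetry of degrees
  have hsym : mp = -mn := by
    have hle1 : (n : ℤ) * mp ≤ (n : ℤ) * (-mn) := by
      by_contra hlt
      push_neg at hlt
      have h1 : (Polynomial.aeval M Ab) ((n : ℤ) * mp) = 0 :=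
        degLE_aeval (by omega : (0:ℤ) ≤ -mn) hdegM Ab (le_of_eq hAbdeg) hlt
      have h2 := aeval_apply_top hmp1 hdegL A (le_refl n)
      rw [← heq2, h1] at h2
      exact (mul_ne_zero hAtop (pow_ne_zero _ hLmp)) h2.symm
    have hle2 : (n : ℤ) * (-mn) ≤ (n : ℤ) * mp := by
      by_contra hlt
      push_neg at hlt
      have h1 : (Polynomial.aeval L₁ A) ((n : ℤ) * (-mn)) = 0 :=
        degLE_aeval (by omega : (0:ℤ) ≤ mp) hdegL A (le_refl n) hlt
      have h2 := aeval_apply_top (by omega : (1:ℤ) ≤ -mn) hdegM Ab (le_of_eq hAbdeg)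
      rw [heq2, h1] at h2
      exact (mul_ne_zero hAbtop (pow_ne_zero _ hMtop)) h2.symm
    exact mul_left_cancel₀ hnZ (le_antisymm hle1 hle2)
  set m := mp with hm
  have hmn_eq : mn = -m := by omega
  have hdegM' : DegLE M m := by rw [hsym]; exact hdegM
  have hMtop' : M m ≠ 0 := by rw [hsym]; exact hMtop
  -- top comparison
  have hkey1 := key hn1 (le_refl n) (le_of_eq hAbdeg) hAbtop hmp1 hdegL hdegM' hLmp hMtop' heq2.symm
  set ζ := M m / L₁ m with hζdef
  -- bottom comparison via invert
  have hinvL : ∀ (x : LaurentPolynomial ℂ) (P : ℂ[X]),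
      Polynomial.aeval (invert x) P = invert (Polynomial.aeval x P) := fun x P =>
    Polynomial.aeval_algHom_apply (LaurentPolynomial.invert.toAlgHom : LaurentPolynomial ℂ →ₐ[ℂ] _) x P
  have heq' : Polynomial.aeval (invert L₁) A = Polynomial.aeval (invert M) Ab := by
    rw [hinvL, hinvL, heq2]
  have hdegL' : DegLE (invert L₁) m := by
    intro i hi
    rw [LaurentPolynomial.invert_apply]
    exact hlowL _ (by omega)
  have hdegM'' : DegLE (invert M) m := by
    intro i hi
    rw [LaurentPolynomial.invert_apply, hM_apply, neg_neg, hdegL (by omega : m < i), map_zero]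
  have hinvLm : (invert L₁) m = L₁ (-m) := LaurentPolynomial.invert_apply L₁ m
  have hinvMm : (invert M) m = M (-m) := LaurentPolynomial.invert_apply M m
  have hLneg : L₁ (-m) ≠ 0 := by rw [show -m = mn by omega]; exact hLmn
  have hMneg : M (-m) ≠ 0 := by
    rw [hM_apply, neg_neg]
    simpa using hLmp
  have hkey2 := key hn1 (le_refl n) (le_of_eq hAbdeg) hAbtop hmp1 hdegL' hdegM''
    (by rw [hinvLm]; exact hLneg) (by rw [hinvMm]; exact hMneg) heq'
  set ζ' := M (-m) / L₁ (-m) with hζ'def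
  -- leading relations
  have e1 := aeval_apply_top hmp1 hdegL A (le_refl n)
  have e1' := aeval_apply_top hmp1 hdegM' Ab (le_of_eq hAbdeg)
  have hlead1 : A.coeff n * (L₁ m) ^ n = Ab.coeff n * (M m) ^ n := by
    rw [heq2] at e1'; rw [e1] at e1'; exact e1'
  have e2 := aeval_apply_top hmp1 hdegL' A (le_refl n)
  have e2' := aeval_apply_top hmp1 hdegM'' Ab (le_of_eq hAbdeg)
  have hlead2 : A.coeff n * (L₁ (-m)) ^ n = Ab.coeff n * (M (-m)) ^ n := by
    rw [heq'] at e2; rw [e2'] at e2; rw [hinvLm, hinvMm] at e2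
    exact e2.symm
  have hζc : M m = ζ * L₁ m := (div_mul_cancel₀ (M m) hLmp).symm
  have hζ'c : M (-m) = ζ' * L₁ (-m) := (div_mul_cancel₀ (M (-m)) hLneg).symm
  have hζ0 : ζ ≠ 0 := div_ne_zero hMtop' hLmp
  have hζ'0 : ζ' ≠ 0 := div_ne_zero hMneg hLneg
  have hζn : Ab.coeff n * ζ ^ n = A.coeff n := by
    have hcpn : (L₁ m) ^ n ≠ 0 := pow_ne_zero _ hLmp
    apply mul_right_cancel₀ hcpn
    rw [hζc, mul_pow] at hlead1
    linear_combination hlead1.symm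
  have hζ'n : Ab.coeff n * ζ' ^ n = A.coeff n := by
    have hcpn : (L₁ (-m)) ^ n ≠ 0 := pow_ne_zero _ hLneg
    apply mul_right_cancel₀ hcpn
    rw [hζ'c, mul_pow] at hlead2
    linear_combination hlead2.symm
  have hζζ'n : ζ ^ n = ζ' ^ n := mul_left_cancel₀ hAbtop (hζn.trans hζ'n.symm)
  have hcc : (starRingEnd ℂ) ζ * ζ' = 1 := by
    have hζval : ζ = (starRingEnd ℂ) (L₁ (-m)) / L₁ m := by
      rw [hζdef, hM_apply]
    have hζ'val : ζ' = (starRingEnd ℂ) (L₁ m) / L₁ (-m) := by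
      rw [hζ'def, hM_apply, neg_neg]
    rw [hζval, hζ'val, map_div₀, Complex.conj_conj]
    have hc1 : (starRingEnd ℂ) (L₁ m) ≠ 0 := by simpa using hLmp
    field_simp
  have hone : (ζ * (starRingEnd ℂ) ζ) ^ n = 1 := by
    calc (ζ * (starRingEnd ℂ) ζ) ^ n = ζ ^ n * ((starRingEnd ℂ) ζ) ^ n := mul_pow _ _ _
      _ = ζ' ^ n * ((starRingEnd ℂ) ζ) ^ n := by rw [hζζ'n]
      _ = ((starRingEnd ℂ) ζ * ζ') ^ n := by rw [mul_pow]; ring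
      _ = 1 := by rw [hcc, one_pow]
  have hnormζ : Complex.normSq ζ = 1 := by
    have h1 : ((Complex.normSq ζ : ℝ) : ℂ) ^ n = 1 := by
      rw [← Complex.mul_conj, hone]
    have h2 : (Complex.normSq ζ : ℝ) ^ n = 1 := by exact_mod_cast h1
    rcases pow_eq_one_iff_cases.mp h2 with h | h | h
    · omega
    · exact h
    · nlinarith [Complex.normSq_nonneg ζ]
  have hζconj : ζ * (starRingEnd ℂ) ζ = 1 := by
    rw [Complex.mul_conj, hnormζ]
    norm_num
  have hζ'ζ : ζ' = ζ := by
    have hinv : (starRingEnd ℂ) ζ = ζ⁻¹ :=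
      eq_inv_of_mul_eq_one_left (by linear_combination hζconj)
    rw [hinv] at hcc
    have h2 : ζ * (ζ⁻¹ * ζ') = ζ * 1 := by rw [hcc]
    rwa [← mul_assoc, mul_inv_cancel₀ hζ0, one_mul, mul_one] at h2
  -- full coefficient relation
  have hMall : ∀ i : ℤ, i ≠ 0 → M i = ζ * L₁ i := by
    intro i hi
    rcases lt_or_gt_of_ne hi with hneg | hpos
    · have hthis := hkey2 (-i) (by omega)
      simp only [LaurentPolynomial.invert_apply, neg_neg] at hthis
      rw [← hζ'def, hζ'ζ] at hthis
      exact hthis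
    · exact hkey1 i (by omega)
  have hconjL : ∀ i : ℤ, i ≠ 0 → (starRingEnd ℂ) (L₁ i) = ζ * L₁ (-i) := by
    intro i hi
    have := hMall (-i) (by omega)
    rwa [hM_apply, neg_neg] at this
  set ℓ₀ := L₁ 0 with hℓ₀
  set cβ := (starRingEnd ℂ) ℓ₀ - ζ * ℓ₀ with hcβ
  obtain ⟨α, hα⟩ := IsAlgClosed.exists_pow_nat_eq ζ (n := 2) (by norm_num)
  have hα0 : α ≠ 0 := by
    intro h0
    rw [h0] at hα
    simp at hα
    exact hζ0 hα.symm
  have hααconj : (starRingEnd ℂ) α * α = 1 := by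
    have h1 : Complex.normSq α ^ 2 = 1 := by
      have hns := map_pow Complex.normSq α 2
      rw [hα] at hns
      rw [← hns, hnormζ]
    have h2 : Complex.normSq α = 1 := by nlinarith [Complex.normSq_nonneg α]
    rw [mul_comm, Complex.mul_conj, h2]
    norm_num
  refine ⟨α, -(α * ℓ₀), hα0, ?_, ?_⟩
  · -- self-conjugacy of α L₁ + β
    intro i
    have happ : ∀ j : ℤ, (LaurentPolynomial.C α * L₁ + LaurentPolynomial.C (-(α * ℓ₀))) j
        = α * L₁ j + (if j = 0 then -(α * ℓ₀) else 0) := by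
      intro j
      rw [AddMonoidAlgebra.coeff_add, Finsupp.add_apply, LaurentPolynomial.C_apply]
      congr 1
      rw [← LaurentPolynomial.single_eq_C, AddMonoidAlgebra.coeff_single_zero_mul]
    rw [happ i, happ (-i)]
    by_cases h0 : i = 0
    · subst h0
      have hz : α * L₁ (0:ℤ) + -(α * ℓ₀) = 0 := by rw [← hℓ₀]; ring
      rw [neg_zero, if_pos rfl, hz, map_zero]
    · rw [if_neg h0, if_neg (by omega : ¬ -i = 0), add_zero, add_zero, map_mul, hconjL i h0]
      have hcα : (starRingEnd ℂ) α * ζ = α := by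
        rw [← hα]
        calc (starRingEnd ℂ) α * α ^ 2 = ((starRingEnd ℂ) α * α) * α := by ring
          _ = α := by rw [hααconj, one_mul]
      linear_combination (L₁ (-i)) * hcα
  · -- real coefficients
    have happC : ∀ (a b : ℂ) (j : ℤ), (LaurentPolynomial.C a * L₁ + LaurentPolynomial.C b) j
        = a * L₁ j + (if j = 0 then b else 0) := by
      intro a b j
      rw [AddMonoidAlgebra.coeff_add, Finsupp.add_apply, LaurentPolynomial.C_apply]
      congr 1
      rw [← LaurentPolynomial.single_eq_C, AddMonoidAlgebra.coeff_single_zero_mul]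
    have hMsum : M = LaurentPolynomial.C ζ * L₁ + LaurentPolynomial.C cβ := by
      ext j
      rw [happC ζ cβ j]
      by_cases h0 : j = 0
      · subst h0
        rw [if_pos rfl, hM_apply, neg_zero, hcβ, hℓ₀]
        ring
      · rw [if_neg h0, add_zero]
        exact hMall j h0
    have hpoly : Ab.comp (Polynomial.C ζ * X + Polynomial.C cβ) = A := by
      apply aeval_injective L₁ hL₁
      rw [Polynomial.aeval_comp]
      have haux : (Polynomial.aeval L₁) (Polynomial.C ζ * X + Polynomial.C cβ) = M := by
        rw [map_add, map_mul, Polynomial.aeval_C, Polynomial.aeval_X, Polynomial.aeval_C,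
          ← LaurentPolynomial.C_eq_algebraMap, ← LaurentPolynomial.C_eq_algebraMap, hMsum]
      rw [haux, heq2]
    have hαinv : α⁻¹ = (starRingEnd ℂ) α := (eq_inv_of_mul_eq_one_left hααconj).symm
    have hCζα : Polynomial.C ζ * Polynomial.C α⁻¹ = (Polynomial.C α : ℂ[X]) := by
      rw [← map_mul]
      congr 1
      rw [hαinv, ← hα]
      linear_combination α * hααconj
    have hCcβ : (Polynomial.C cβ : ℂ[X]) + Polynomial.C ζ * Polynomial.C α⁻¹ * (Polynomial.C α * Polynomial.C ℓ₀)
        = Polynomial.C ((starRingEnd ℂ) ℓ₀) := by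
      rw [← map_mul, ← map_mul, ← map_mul, ← map_add]
      congr 1
      rw [hcβ, hαinv]
      linear_combination (ζ * ℓ₀) * hααconj
    have h1 : A.comp (Polynomial.C α⁻¹ * (X - Polynomial.C (-(α * ℓ₀))))
        = Ab.comp (Polynomial.C α * X + Polynomial.C ((starRingEnd ℂ) ℓ₀)) := by
      conv_lhs => rw [← hpoly]
      rw [Polynomial.comp_assoc]
      congr 1
      rw [Polynomial.add_comp, Polynomial.mul_comp, Polynomial.C_comp, Polynomial.X_comp,
        Polynomial.C_comp, map_neg, map_mul]
      linear_combination (X : ℂ[X]) * hCζα + hCcβ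
    have hCζcα : Polynomial.C ζ * Polynomial.C ((starRingEnd ℂ) α) = (Polynomial.C α : ℂ[X]) := by
      rw [← map_mul]
      congr 1
      rw [← hα]
      linear_combination α * hααconj
    have hCℓ : Polynomial.C ζ * Polynomial.C ℓ₀ + (Polynomial.C cβ : ℂ[X])
        = Polynomial.C ((starRingEnd ℂ) ℓ₀) := by
      rw [← map_mul, ← map_add]
      congr 1
      rw [hcβ]
      ring
    have h2 : A.comp (Polynomial.C ((starRingEnd ℂ) α) * X + Polynomial.C ℓ₀)
        = Ab.comp (Polynomial.C α * X + Polynomial.C ((starRingEnd ℂ) ℓ₀)) := by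
      conv_lhs => rw [← hpoly]
      rw [Polynomial.comp_assoc]
      congr 1
      rw [Polynomial.add_comp, Polynomial.mul_comp, Polynomial.C_comp, Polynomial.X_comp,
        Polynomial.C_comp]
      linear_combination (X : ℂ[X]) * hCζcα + hCℓ
    have hAbA : Ab.map (starRingEnd ℂ) = A := by
      rw [hAb, Polynomial.map_map]
      rw [show (starRingEnd ℂ).comp (starRingEnd ℂ) = RingHom.id ℂ from
        RingHom.ext fun z => Complex.conj_conj z]
      exact Polynomial.map_id
    have hmapconj : ((A.comp (Polynomial.C α⁻¹ * (X - Polynomial.C (-(α * ℓ₀))))).map (starRingEnd ℂ))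
        = A.comp (Polynomial.C α⁻¹ * (X - Polynomial.C (-(α * ℓ₀)))) := by
      rw [h1, Polynomial.map_comp, hAbA]
      have hq : (Polynomial.C α * X + Polynomial.C ((starRingEnd ℂ) ℓ₀)).map (starRingEnd ℂ)
          = Polynomial.C ((starRingEnd ℂ) α) * X + Polynomial.C ℓ₀ := by
        simp [Polynomial.map_add, Polynomial.map_mul, Complex.conj_conj]
      rw [hq, h2, ← h1]
    intro i
    have hco := congrArg (fun p => Polynomial.coeff p i) hmapconj
    simp only [Polynomial.coeff_map] at hco
    exact Complex.conj_eq_iff_im.mp hco
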